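/- Let K be a finite field of characteristic p viewed as a vector space over a subfield F = F_{p^a}, let f : K → K be a nonzero F-linear map with f² = 0, and let χ : K → F be a nonzero additive map with χ∘f = 0. Define α(x) = 1 + χ(x)·f (an F-linear automorphism of K). Then α satisfies the cocycle condition α(x+y) = α(α(y)(x))·α(y) for all x, y ∈ K; in particular I_{χ,f} = {(x, 1 - χ(x)f) : x ∈ K} is a subgroup of I ⋊ GL(K_F) acting transitively on K. -/

import Mathlib

section Aux

variable {F K : Type*} [Field F] [Field K] [Algebra F K]
variable (f : K →ₗ[F] K) (χ : K →+ F)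

/-- The affine-type map `z ↦ x + (z - χ x • f z)`. -/
def stmt5A (x z : K) : K := x + (z - χ x • f z)

lemma stmt5A_comp (hff : ∀ z : K, f (f z) = 0)
    (hχs : ∀ (c : F) (y : K), χ (c • f y) = 0) (x y z : K) :
    stmt5A f χ x (stmt5A f χ y z) = stmt5A f χ (x + y - χ x • f y) z := by
  simp only [stmt5A, map_add, map_sub, map_smul, hff, smul_zero, sub_zero, hχs,
    add_smul, smul_add, smul_sub]
  abel

lemma stmt5A_zero (z : K) : stmt5A f χ 0 z = z := by
  simp [stmt5A]

/-- The permutation `z ↦ x + (z - χ x • f z)`. -/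
def stmt5Perm (hff : ∀ z : K, f (f z) = 0)
    (hχs : ∀ (c : F) (y : K), χ (c • f y) = 0) (x : K) : Equiv.Perm K where
  toFun := stmt5A f χ x
  invFun := stmt5A f χ (-x - χ x • f x)
  left_inv z := by
    rw [stmt5A_comp f χ hff hχs]
    have h : (-x - χ x • f x) + x - χ (-x - χ x • f x) • f x = 0 := by
      simp only [map_sub, map_neg, hχs, sub_zero, neg_smul, sub_neg_eq_add]
      abel
    rw [h, stmt5A_zero]
  right_inv z := by
    rw [stmt5A_comp f χ hff hχs]
    have h : x + (-x - χ x • f x) - χ x • f (-x - χ x • f x) = 0 := by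
      simp only [map_sub, map_neg, map_smul, hff, smul_zero, sub_zero, smul_neg,
        sub_neg_eq_add]
      abel
    rw [h, stmt5A_zero]

end Aux

/-- With `f : K → K` a nonzero `F`-linear map with `f² = 0` and
`χ : K → F` a nonzero additive map with `χ ∘ f = 0`, the map `α(x) = 1 + χ(x)·f`
satisfies the cocycle condition `α(x+y) = α(α(y)(x)) ∘ α(y)`, and consequently
`I_{χ,f} = {(x, 1 - χ(x)f) : x ∈ K}`, realized inside `Perm K` as the set of
permutations `z ↦ x + z - χ(x)·f(z)`, is a subgroup of `I ⋊ GL(K_F)` acting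
transitively on `K`. -/
theorem stmt5 (p m a : ℕ) (hp : p.Prime) (ham : a ∣ m)
    (F K : Type*) [Field F] [Field K] [Algebra F K] [Fintype F] [Fintype K]
    (hF : Fintype.card F = p ^ a) (hK : Fintype.card K = p ^ m)
    (f : K →ₗ[F] K) (hf : f ≠ 0) (hf2 : f ∘ₗ f = 0)
    (χ : K →+ F) (hχ : χ ≠ 0) (hχf : ∀ x : K, χ (f x) = 0) :
    (∀ x y : K, (fun z : K => z + χ (x + y) • f z)
        = (fun z : K => z + χ (x + χ y • f x) • f z) ∘ (fun z : K => z + χ y • f z)) ∧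
    ∃ S : Subgroup (Equiv.Perm K),
      (S : Set (Equiv.Perm K)) = {σ : Equiv.Perm K | ∃ x : K, (σ : K → K) = fun z : K => x + (z - χ x • f z)} ∧
      ∀ z w : K, ∃ σ ∈ S, σ z = w := by
  have hff : ∀ z : K, f (f z) = 0 := fun z => by
    simpa using LinearMap.congr_fun hf2 z
  have hχs : ∀ (c : F) (y : K), χ (c • f y) = 0 := fun c y => by
    rw [← map_smul]; exact hχf _
  constructor
  · intro x y
    funext z
    simp only [Function.comp_apply, map_add, hχs, add_zero, map_smul, hff, smul_zero,
      add_smul, smul_add]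
    abel
  · refine ⟨⟨⟨⟨setOf (fun σ : Equiv.Perm K =>
        ∃ x : K, (σ : K → K) = fun z : K => x + (z - χ x • f z)), ?_⟩, ?_⟩, ?_⟩, rfl, ?_⟩
    · rintro σ τ ⟨x, hx⟩ ⟨y, hy⟩
      refine ⟨x + y - χ x • f y, ?_⟩
      funext z
      have : σ (τ z) = stmt5A f χ (x + y - χ x • f y) z := by
        rw [hy]; rw [hx]
        exact stmt5A_comp f χ hff hχs x y z
      simpa [stmt5A] using this
    · exact ⟨0, by funext z; simp [stmt5A]⟩
    · rintro σ ⟨x, hx⟩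
      refine ⟨-x - χ x • f x, ?_⟩
      funext z
      apply σ.injective
      rw [← Equiv.Perm.mul_apply, mul_inv_cancel, Equiv.Perm.one_apply]
      have : σ ((fun z : K => (-x - χ x • f x) + (z - χ (-x - χ x • f x) • f z)) z)
          = stmt5A f χ x (stmt5A f χ (-x - χ x • f x) z) := by rw [hx]; rfl
      rw [this, stmt5A_comp f χ hff hχs]
      have h : x + (-x - χ x • f x) - χ x • f (-x - χ x • f x) = 0 := by
        simp only [map_sub, map_neg, map_smul, hff, smul_zero, sub_zero, smul_neg,
          sub_neg_eq_add]
        abel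
      rw [h, stmt5A_zero]
    · intro z w
      refine ⟨stmt5Perm f χ hff hχs (w - z + χ (w - z) • f z), ⟨_, rfl⟩, ?_⟩
      show stmt5A f χ (w - z + χ (w - z) • f z) z = w
      simp only [stmt5A, map_add, hχs, add_zero]
      abel
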